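/- Fix L > 0 and R = (R₁,R₂) ∈ ℕ², let Λ := {k ∈ ℤ² : k positive, k₁ < L R₁, k₂ < L R₂}, and regard the truncated Euler vector field B^{L,R} as a smooth vector field on ℝ^{2|Λ|} via the real coordinates φ_k = x_k + i y_k, k ∈ Λ. Then its Euclidean divergence vanishes identically: Σ_{k∈Λ} ( ∂(Re B_k^{L,R})/∂x_k + ∂(Im B_k^{L,R})/∂y_k )(φ) = 0 for every φ. -/
import Mathlib


open Complex
open scoped Classical

/-- A lattice point k = (k₁,k₂) ∈ ℤ² is positive if k₁ > 0, or k₁ = 0 and k₂ > 0. -/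
def PosLat (k : ℤ × ℤ) : Prop := 0 < k.1 ∨ (k.1 = 0 ∧ 0 < k.2)

/-- Euclidean norm of a lattice point. -/
noncomputable def knorm (k : ℤ × ℤ) : ℝ := Real.sqrt ((k.1 : ℝ) ^ 2 + (k.2 : ℝ) ^ 2)

/-- h⊥ := (−h₂, h₁). -/
def perp (h : ℤ × ℤ) : ℤ × ℤ := (-h.2, h.1)

/-- Euclidean inner product on ℤ². -/
def zdot (a b : ℤ × ℤ) : ℤ := a.1 * b.1 + a.2 * b.2

/-- The coefficients α_{h,k}^L of the Euler nonlinearity. -/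
noncomputable def alphaL (L : ℝ) (h k : ℤ × ℤ) : ℝ :=
  (1 / L) * (2 * Real.pi / L) ^ 2 *
    ((zdot (perp h) k : ℝ) * (zdot k h : ℝ) / (zdot k k : ℝ) - (zdot (perp h) k : ℝ) / 2)

/-- The truncation set Λ = {k positive : k₁ < L R₁, k₂ < L R₂}. -/
def lamSet (L : ℝ) (R₁ R₂ : ℕ) : Set (ℤ × ℤ) :=
  {k | PosLat k ∧ (k.1 : ℝ) < L * R₁ ∧ (k.2 : ℝ) < L * R₂}

/-- Extension of φ : Λ → ℂ to ℤ² by φ_{−k} := conj(φ_k) for k ∈ Λ and 0 off Λ ∪ (−Λ). -/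
noncomputable def extCoeff (S : Set (ℤ × ℤ)) (φ : S → ℂ) (j : ℤ × ℤ) : ℂ :=
  if h : j ∈ S then φ ⟨j, h⟩
  else if h' : -j ∈ S then (starRingEnd ℂ) (φ ⟨-j, h'⟩) else 0

/-- The truncated Euler vector field B_k^{L,R}(φ) = Σ_{h ∈ Λ, h ≠ k} α_{h,k}^L φ_h φ_{k−h}. -/
noncomputable def BGal (L : ℝ) (S : Set (ℤ × ℤ)) (k : ℤ × ℤ) (φ : S → ℂ) : ℂ :=
  ∑' h : {h : ℤ × ℤ // h ∈ S ∧ h ≠ k},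
    (alphaL L h.1 k : ℂ) * extCoeff S φ h.1 * extCoeff S φ (k - h.1)

/-- B_k does not depend on the k-th coordinate of φ: the only potentially dependent
term (h = 2k) has vanishing coefficient α_{2k,k}. -/
lemma BGal_update_self (L : ℝ) (R₁ R₂ : ℕ) (φ : lamSet L R₁ R₂ → ℂ)
    (k : lamSet L R₁ R₂) (v : ℂ) :
    BGal L (lamSet L R₁ R₂) k.1 (Function.update φ k v)
      = BGal L (lamSet L R₁ R₂) k.1 φ := by
  unfold BGal
  apply tsum_congr
  rintro ⟨h, hhS, hhk⟩
  dsimp only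
  have hne : (⟨h, hhS⟩ : lamSet L R₁ R₂) ≠ k := by
    intro e; rw [Subtype.ext_iff] at e; exact hhk e
  have e1 : extCoeff (lamSet L R₁ R₂) (Function.update φ k v) h = extCoeff (lamSet L R₁ R₂) φ h := by
    simp only [extCoeff, dif_pos hhS, Function.update_of_ne hne]
  rw [e1]
  by_cases h1 : (k.1 - h) ∈ lamSet L R₁ R₂
  · have hne2 : (⟨k.1 - h, h1⟩ : lamSet L R₁ R₂) ≠ k := by
      intro e
      rw [Subtype.ext_iff] at e
      have e11 : k.1.1 - h.1 = k.1.1 := congrArg Prod.fst e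
      have e12 : k.1.2 - h.2 = k.1.2 := congrArg Prod.snd e
      have hzero : h = (0 : ℤ × ℤ) := by
        refine Prod.ext ?_ ?_ <;> simp <;> omega
      have hp := hhS.1
      rw [hzero] at hp
      rcases hp with hpos | ⟨_, hpos⟩ <;> simp at hpos
    simp only [extCoeff, dif_pos h1, Function.update_of_ne hne2]
  · by_cases h2 : -(k.1 - h) ∈ lamSet L R₁ R₂
    · by_cases h3 : -(k.1 - h) = k.1
      · have h2k : h = k.1 + k.1 := by
          have h31 : -(k.1.1 - h.1) = k.1.1 := congrArg Prod.fst h3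
          have h32 : -(k.1.2 - h.2) = k.1.2 := congrArg Prod.snd h3
          refine Prod.ext ?_ ?_ <;> simp [Prod.fst_add, Prod.snd_add] <;> omega
        have hz : zdot (perp h) k.1 = 0 := by
          rw [h2k]; simp [zdot, perp]; ring
        have hα : alphaL L h k.1 = 0 := by
          simp [alphaL, hz]
        rw [hα]; simp
      · have hne3 : (⟨-(k.1 - h), h2⟩ : lamSet L R₁ R₂) ≠ k := by
          intro e; rw [Subtype.ext_iff] at e; exact h3 e
        simp only [extCoeff, dif_neg h1, dif_pos h2, Function.update_of_ne hne3]
    · simp only [extCoeff, dif_neg h1, dif_neg h2]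

theorem truncated_euler_divergence_free
    (L : ℝ) (hL : 0 < L) (R₁ R₂ : ℕ) (φ : lamSet L R₁ R₂ → ℂ) :
    (∑' k : lamSet L R₁ R₂,
      (deriv (fun s : ℝ =>
          (BGal L (lamSet L R₁ R₂) k.1 (Function.update φ k (φ k + s))).re) 0
        + deriv (fun s : ℝ =>
          (BGal L (lamSet L R₁ R₂) k.1 (Function.update φ k (φ k + s * Complex.I))).im) 0))
      = 0 := by
  have hzero : ∀ k : lamSet L R₁ R₂,
      (deriv (fun s : ℝ =>
          (BGal L (lamSet L R₁ R₂) k.1 (Function.update φ k (φ k + s))).re) 0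
        + deriv (fun s : ℝ =>
          (BGal L (lamSet L R₁ R₂) k.1 (Function.update φ k (φ k + s * Complex.I))).im) 0) = 0 := by
    intro k
    have c1 : (fun s : ℝ =>
        (BGal L (lamSet L R₁ R₂) k.1 (Function.update φ k (φ k + s))).re)
        = fun _ => (BGal L (lamSet L R₁ R₂) k.1 φ).re := by
      funext s; rw [BGal_update_self]
    have c2 : (fun s : ℝ =>
        (BGal L (lamSet L R₁ R₂) k.1 (Function.update φ k (φ k + s * Complex.I))).im)
        = fun _ => (BGal L (lamSet L R₁ R₂) k.1 φ).im := by
      funext s; rw [BGal_update_self]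
    rw [c1, c2, deriv_const, deriv_const]; ring
  calc (∑' k : lamSet L R₁ R₂, _) = ∑' _ : lamSet L R₁ R₂, (0:ℝ) := tsum_congr hzero
    _ = 0 := tsum_zero
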